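/- Let 0 < α ≤ 1, let A : 𝓑 → ℝ be α-Hölder, let ψ_A > 0 be a continuous eigenfunction of L_A with eigenvalue λ_A > 0 such that log ψ_A is α-Hölder, let Ā = A + log ψ_A − log ψ_A ∘ σ − log λ_A, and let m be the unique Borel probability measure fixed by L_Ā^*. Then for every α-Hölder φ : 𝓑 → ℝ, the functions L_A^n(φ)/λ_A^n converge uniformly on 𝓑, as n → ∞, to the function x ↦ ψ_A(x)·∫ (φ/ψ_A) dm. -/

import Mathlib

open MeasureTheory Filter Topology

noncomputable section

instance : Fact (0 < 2 * Real.pi) := ⟨by positivity⟩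

/-- The circle `M = ℝ/2πℤ` with arc-length metric. -/
abbrev Circ : Type := AddCircle (2 * Real.pi)

/-- The normalized Haar (Lebesgue) probability measure on the circle. -/
def haarC : Measure Circ := AddCircle.haarAddCircle

/-- The Bernoulli space `𝓑 = M^ℕ`. -/
abbrev Bs : Type := ℕ → Circ

/-- The left shift `σ`. -/
def shift (x : Bs) : Bs := fun n => x (n + 1)

/-- Prepending a symbol: `cons a x = ax = (a, x₀, x₁, …)`. -/
def cons (a : Circ) (x : Bs) : Bs := fun n =>
  match n with
  | 0 => a
  | k + 1 => x k

/-- The metric `d(x,y) = Σ_k 2^{-k} d_M(x_k, y_k)` on `𝓑`. -/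
def dB (x y : Bs) : ℝ := ∑' k : ℕ, (1 / 2 : ℝ) ^ k * dist (x k) (y k)

/-- `A` is α-Hölder with constant `H` for the metric `dB`. -/
def IsHolderB (α H : ℝ) (A : Bs → ℝ) : Prop := ∀ x y, |A x - A y| ≤ H * dB x y ^ α

/-- The Ruelle operator `L_A ψ (x) = ∫_M e^{A(ax)} ψ(ax) da`. -/
def Ruelle (A : Bs → ℝ) (ψ : Bs → ℝ) : Bs → ℝ :=
  fun x => ∫ a, Real.exp (A (cons a x)) * ψ (cons a x) ∂haarC

/-- `m` is a fixed point of the dual Ruelle operator `L_A^*`. -/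
def FixedDual (A : Bs → ℝ) (m : Measure Bs) : Prop :=
  ∀ ψ : Bs → ℝ, Continuous ψ → (∃ C, ∀ x, |ψ x| ≤ C) →
    ∫ x, Ruelle A ψ x ∂m = ∫ x, ψ x ∂m

/-- The normalized potential `Ā = A + log ψ_A − log ψ_A ∘ σ − log λ_A`. -/
def normPot (A ψ : Bs → ℝ) (lam : ℝ) : Bs → ℝ :=
  fun x => A x + Real.log (ψ x) - Real.log (ψ (shift x)) - Real.log lam


-- ===== auxiliary development =====

lemma dist_circ_le (a b : Circ) : dist a b ≤ Real.pi := by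
  have h := AddCircle.norm_le_half_period (p := 2 * Real.pi) (x := a - b) (by positivity)
  rw [dist_eq_norm]
  rw [abs_of_pos (by positivity)] at h
  linarith [h]

lemma dist_circ_nonneg (a b : Circ) : (0:ℝ) ≤ dist a b := dist_nonneg

lemma summable_dB (x y : Bs) : Summable (fun k : ℕ => (1 / 2 : ℝ) ^ k * dist (x k) (y k)) := by
  have hg : Summable (fun k : ℕ => (1/2:ℝ)^k * Real.pi) :=
    Summable.mul_right Real.pi (summable_geometric_of_lt_one (r := 1/2) (by norm_num) (by norm_num))
  apply Summable.of_nonneg_of_le (fun k => by positivity) (fun k => ?_) hg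
  exact mul_le_mul_of_nonneg_left (dist_circ_le _ _) (by positivity)

lemma dB_nonneg (x y : Bs) : 0 ≤ dB x y := tsum_nonneg (fun k => by positivity)

lemma dB_symm (x y : Bs) : dB x y = dB y x := by simp [dB, dist_comm]

lemma dB_le (x y : Bs) : dB x y ≤ 2 * Real.pi := by
  have h := Summable.tsum_le_tsum (f := fun k : ℕ => (1/2:ℝ)^k * dist (x k) (y k))
    (g := fun k : ℕ => (1/2:ℝ)^k * Real.pi)
    (fun k => mul_le_mul_of_nonneg_left (dist_circ_le _ _) (by positivity))
    (summable_dB x y) (Summable.mul_right Real.pi (summable_geometric_of_lt_one (r := 1/2) (by norm_num) (by norm_num)))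
  calc dB x y ≤ ∑' k : ℕ, (1/2:ℝ)^k * Real.pi := h
    _ = (∑' k : ℕ, (1/2:ℝ)^k) * Real.pi := tsum_mul_right
    _ = 2 * Real.pi := by rw [tsum_geometric_of_lt_one (r := 1/2) (by norm_num) (by norm_num)]; norm_num

lemma dB_cons (a b : Circ) (x y : Bs) : dB (cons a x) (cons b y) = dist a b + dB x y / 2 := by
  have hs := summable_dB (cons a x) (cons b y)
  have h0 := Summable.tsum_eq_zero_add hs
  have : (fun k : ℕ => (1/2:ℝ)^(k+1) * dist (cons a x (k+1)) (cons b y (k+1)))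
      = fun k : ℕ => (1/2) * ((1/2:ℝ)^k * dist (x k) (y k)) := by
    funext k; simp [cons, pow_succ]; ring
  rw [dB, h0]
  simp only [pow_zero, one_mul]
  rw [this, tsum_mul_left]
  simp [cons, dB]
  ring

lemma dB_cons_same (a : Circ) (x y : Bs) : dB (cons a x) (cons a y) = dB x y / 2 := by
  rw [dB_cons]; simp

lemma dB_shift_le (x y : Bs) : dB (shift x) (shift y) ≤ 2 * dB x y := by
  have h2 : dB (shift x) (shift y) = 2 * ∑' k : ℕ, (1/2:ℝ)^(k+1) * dist (x (k+1)) (y (k+1)) := by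
    rw [dB, ← tsum_mul_left]
    congr 1; funext k; simp [shift, pow_succ]; ring
  rw [h2]
  have hmono : ∑' k : ℕ, (1/2:ℝ)^(k+1) * dist (x (k+1)) (y (k+1)) ≤ dB x y := by
    apply Summable.tsum_le_tsum_of_inj (fun k => k + 1) (fun a b h => by simpa using h)
      (fun c _ => by positivity) (fun k => le_refl _)
      (by
        have := (summable_dB x y).comp_injective (i := fun k : ℕ => k + 1) (fun a b h => by simpa using h)
        exact this)
      (summable_dB x y)
  linarith

-- continues base
lemma dB_continuous (x : Bs) : Continuous (fun y => dB x y) := by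
  apply continuous_tsum (u := fun k : ℕ => (1/2:ℝ)^k * Real.pi)
  · intro k
    exact continuous_const.mul (Continuous.dist continuous_const (continuous_apply k))
  · exact Summable.mul_right Real.pi (summable_geometric_of_lt_one (r := 1/2) (by norm_num) (by norm_num))
  · intro k y
    rw [Real.norm_eq_abs, abs_of_nonneg (by positivity)]
    exact mul_le_mul_of_nonneg_left (dist_circ_le _ _) (by positivity)

lemma isHolderB_mono {α C C' : ℝ} {g : Bs → ℝ} (h : IsHolderB α C g) (hle : C ≤ C') :
    IsHolderB α C' g := fun x y =>
  (h x y).trans (mul_le_mul_of_nonneg_right hle (Real.rpow_nonneg (dB_nonneg x y) α))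

lemma continuous_of_holder {α C : ℝ} (hα0 : 0 < α) {g : Bs → ℝ} (h : IsHolderB α C g) :
    Continuous g := by
  rw [continuous_iff_continuousAt]
  intro x
  rw [ContinuousAt, tendsto_iff_dist_tendsto_zero]
  have hd : Tendsto (fun y => dB x y) (nhds x) (nhds 0) := by
    have := (dB_continuous x).tendsto x
    simpa [dB] using this
  have hrp : Tendsto (fun y => C * dB x y ^ α) (nhds x) (nhds 0) := by
    have h1 : ContinuousAt (fun t : ℝ => t ^ α) 0 :=
      Real.continuousAt_rpow_const 0 α (Or.inr hα0.le)
    have h2 : Tendsto (fun y => dB x y ^ α) (nhds x) (nhds ((0:ℝ) ^ α)) := h1.tendsto.comp hd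
    rw [Real.zero_rpow hα0.ne'] at h2
    simpa using h2.const_mul C
  apply squeeze_zero (fun y => dist_nonneg) (fun y => ?_) hrp
  rw [Real.dist_eq]
  have := h y x
  rwa [dB_symm y x] at this

/-- base point -/
def pt : Bs := fun _ => (0 : Circ)

lemma holder_bounded {α C : ℝ} (hα0 : 0 ≤ α) {g : Bs → ℝ} (hC : 0 ≤ C) (h : IsHolderB α C g) :
    ∀ x, |g x - g pt| ≤ C * (2 * Real.pi) ^ α := by
  intro x
  refine (h x pt).trans (mul_le_mul_of_nonneg_left ?_ hC)
  exact Real.rpow_le_rpow (dB_nonneg _ _) (dB_le _ _) hα0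

lemma continuous_cons (x : Bs) : Continuous (fun a => cons a x) := by
  apply continuous_pi
  intro n
  cases n with
  | zero => exact continuous_id
  | succ k => exact continuous_const

lemma bound_of_continuous (F : Bs → ℝ) (hF : Continuous F) : ∃ b, 0 ≤ b ∧ ∀ x, |F x| ≤ b := by
  obtain ⟨b, hb⟩ := isCompact_univ.exists_bound_of_continuousOn hF.continuousOn
  exact ⟨max b 0, le_max_right _ _, fun x => by
    have := hb x (Set.mem_univ x); rw [Real.norm_eq_abs] at this
    exact this.trans (le_max_left _ _)⟩

lemma integrable_bdd {X : Type*} [MeasurableSpace X] [TopologicalSpace X] [OpensMeasurableSpace X]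
    (μ : Measure X) [IsFiniteMeasure μ] (F : X → ℝ) (hF : Continuous F) (b : ℝ)
    (hb : ∀ x, |F x| ≤ b) : Integrable F μ :=
  ⟨hF.aestronglyMeasurable, HasFiniteIntegral.of_bounded (C := b)
    (Filter.Eventually.of_forall (fun x => by rw [Real.norm_eq_abs]; exact hb x))⟩

instance : IsProbabilityMeasure haarC := by
  unfold haarC; infer_instance

lemma integrable_circ (h : Circ → ℝ) (hh : Continuous h) : Integrable h haarC := by
  obtain ⟨b, hb⟩ := isCompact_univ.exists_bound_of_continuousOn hh.continuousOn
  exact integrable_bdd haarC h hh b (fun x => by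
    have := hb x (Set.mem_univ x); rwa [Real.norm_eq_abs] at this)

lemma shift_cons (a : Circ) (x : Bs) : shift (cons a x) = x := rfl

lemma exp_lip {u v M : ℝ} (hu : Real.exp u ≤ M) (hv : Real.exp v ≤ M) :
    |Real.exp u - Real.exp v| ≤ M * |u - v| := by
  have key : ∀ s t : ℝ, s ≤ t → Real.exp t ≤ M → Real.exp t - Real.exp s ≤ M * (t - s) := by
    intro s t hst hM
    have h1 : 1 - (t - s) ≤ Real.exp (-(t - s)) := by
      have := Real.add_one_le_exp (-(t - s)); linarith
    have h2 : Real.exp t - Real.exp s = Real.exp t * (1 - Real.exp (-(t-s))) := by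
      rw [mul_sub, mul_one, ← Real.exp_add]; ring_nf
    rw [h2]
    calc Real.exp t * (1 - Real.exp (-(t-s))) ≤ Real.exp t * (t - s) := by
          apply mul_le_mul_of_nonneg_left (by linarith) (Real.exp_pos t).le
      _ ≤ M * (t - s) := by apply mul_le_mul_of_nonneg_right hM (by linarith)
  rcases le_total u v with h | h
  · rw [abs_of_nonpos (by simp [Real.exp_le_exp, h]), abs_of_nonpos (by linarith)]
    have := key u v h hv; linarith
  · rw [abs_of_nonneg (by simp [Real.exp_le_exp, h]), abs_of_nonneg (by linarith)]
    have := key v u h hu; linarith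

structure PotData (α : ℝ) where
  hα : 0 < α
  E : Bs → ℝ
  HE : ℝ
  hHE : 0 ≤ HE
  hol : IsHolderB α HE E
  eps : ℝ
  heps : 0 < eps
  M : ℝ
  low : ∀ x, eps ≤ Real.exp (E x)
  up : ∀ x, Real.exp (E x) ≤ M
  norm1 : ∀ x, ∫ a, Real.exp (E (cons a x)) ∂haarC = 1

/-- the zero potential (giving the plain averaging operator). -/
def zeroPot (α : ℝ) (hα0 : 0 < α) : PotData α where
  hα := hα0
  E := fun _ => 0
  HE := 0
  hHE := le_refl 0
  hol := fun x y => by simp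
  eps := 1
  heps := one_pos
  M := 1
  low := fun x => by simp
  up := fun x => by simp
  norm1 := fun x => by simp

namespace PotData

variable {α : ℝ} (P : PotData α)

def L (u : Bs → ℝ) : Bs → ℝ := Ruelle P.E u

lemma contE : Continuous P.E := continuous_of_holder P.hα P.hol

lemma contw : Continuous fun z => Real.exp (P.E z) := Real.continuous_exp.comp P.contE

lemma wpos (z : Bs) : 0 < Real.exp (P.E z) := Real.exp_pos _

lemma Mpos : 0 < P.M := lt_of_lt_of_le (Real.exp_pos _) (P.up pt)

/-- integrability of the standard integrands -/
lemma int_mix {u : Bs → ℝ} (hu : Continuous u) (x y : Bs) :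
    Integrable (fun a => Real.exp (P.E (cons a x)) * u (cons a y)) haarC :=
  integrable_circ _ ((P.contw.comp (continuous_cons x)).mul (hu.comp (continuous_cons y)))

lemma int_w (x : Bs) : Integrable (fun a => Real.exp (P.E (cons a x))) haarC :=
  integrable_circ _ (P.contw.comp (continuous_cons x))

lemma eps_le_one : P.eps ≤ 1 := by
  have h := P.norm1 pt
  have h2 : P.eps = ∫ _a, P.eps ∂haarC := by simp
  rw [h2, ← h]
  exact integral_mono (integrable_const _) (P.int_w pt) (fun a => P.low _)

lemma L_le {u v : Bs → ℝ} (hu : Continuous u) (hv : Continuous v) (h : ∀ z, u z ≤ v z)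
    (x : Bs) : P.L u x ≤ P.L v x :=
  integral_mono (P.int_mix hu x x) (P.int_mix hv x x)
    (fun a => mul_le_mul_of_nonneg_left (h _) (P.wpos _).le)

lemma L_lower {u : Bs → ℝ} (hu : Continuous u) {i : ℝ} (h : ∀ z, i ≤ u z) (x : Bs) :
    i ≤ P.L u x := by
  have h1 : i = ∫ a, Real.exp (P.E (cons a x)) * i ∂haarC := by
    rw [integral_mul_const, P.norm1 x, one_mul]
  rw [h1]
  exact integral_mono ((P.int_w x).mul_const i) (P.int_mix hu x x)
    (fun a => mul_le_mul_of_nonneg_left (h _) (P.wpos _).le)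

lemma L_upper {u : Bs → ℝ} (hu : Continuous u) {s : ℝ} (h : ∀ z, u z ≤ s) (x : Bs) :
    P.L u x ≤ s := by
  have h1 : s = ∫ a, Real.exp (P.E (cons a x)) * s ∂haarC := by
    rw [integral_mul_const, P.norm1 x, one_mul]
  rw [h1]
  exact integral_mono (P.int_mix hu x x) ((P.int_w x).mul_const s)
    (fun a => mul_le_mul_of_nonneg_left (h _) (P.wpos _).le)

lemma L_affine {u : Bs → ℝ} (hu : Continuous u) (c : ℝ) (x : Bs) :
    P.L (fun z => c + u z) x = c + P.L u x := by
  have h1 : (fun a => Real.exp (P.E (cons a x)) * (c + u (cons a x)))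
      = fun a => Real.exp (P.E (cons a x)) * c + Real.exp (P.E (cons a x)) * u (cons a x) := by
    funext a; ring
  show (∫ a, Real.exp (P.E (cons a x)) * (c + u (cons a x)) ∂haarC) = _
  rw [h1, integral_add ((P.int_w x).mul_const c) (P.int_mix hu x x),
    integral_mul_const, P.norm1 x, one_mul]
  rfl

lemma L_neg (u : Bs → ℝ) (x : Bs) : P.L (fun z => -u z) x = -(P.L u x) := by
  show (∫ a, Real.exp (P.E (cons a x)) * (-(u (cons a x))) ∂haarC) = _
  simp only [mul_neg]
  rw [integral_neg]
  rfl

lemma L_smul (u : Bs → ℝ) (c : ℝ) (x : Bs) : P.L (fun z => c * u z) x = c * P.L u x := by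
  show (∫ a, Real.exp (P.E (cons a x)) * (c * u (cons a x)) ∂haarC) = _
  have h1 : (fun a => Real.exp (P.E (cons a x)) * (c * u (cons a x)))
      = fun a => c * (Real.exp (P.E (cons a x)) * u (cons a x)) := by funext a; ring
  rw [h1, integral_const_mul]
  rfl

end PotData

namespace PotData
variable {α : ℝ} (P : PotData α)

lemma step_holder {u : Bs → ℝ} {C O i : ℝ} (hu : IsHolderB α C u) (hC : 0 ≤ C)
    (hbd : ∀ z, i ≤ u z ∧ u z ≤ i + O) :
    IsHolderB α ((1/2:ℝ)^α * (C + P.M * P.HE * O)) (P.L u) := by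
  have huc : Continuous u := continuous_of_holder P.hα hu
  have hO : 0 ≤ O := by have h := hbd pt; linarith [h.1, h.2]
  have key : ∀ x y, P.L u x - P.L u y ≤ ((1/2:ℝ)^α * (C + P.M * P.HE * O)) * dB x y ^ α := by
    intro x y
    set d := dB x y with hd
    have hdnn : 0 ≤ d := dB_nonneg x y
    have hθd : ((1/2:ℝ) * d) ^ α = (1/2:ℝ)^α * d^α := Real.mul_rpow (by norm_num) hdnn
    have hcons : ∀ a : Circ, dB (cons a x) (cons a y) = (1/2) * d := fun a => by
      rw [dB_cons_same]; ring
    set wx : Circ → ℝ := fun a => Real.exp (P.E (cons a x)) with hwx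
    set wy : Circ → ℝ := fun a => Real.exp (P.E (cons a y)) with hwy
    have cwx : Continuous wx := P.contw.comp (continuous_cons x)
    have cwy : Continuous wy := P.contw.comp (continuous_cons y)
    have cux : Continuous fun a : Circ => u (cons a x) := huc.comp (continuous_cons x)
    have cuy : Continuous fun a : Circ => u (cons a y) := huc.comp (continuous_cons y)
    have int1 : Integrable (fun a => wx a * (u (cons a x) - u (cons a y))) haarC :=
      integrable_circ _ (cwx.mul (cux.sub cuy))
    have int2 : Integrable (fun a => (wx a - wy a) * (u (cons a y) - i)) haarC :=
      integrable_circ _ ((cwx.sub cwy).mul (cuy.sub continuous_const))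
    have int3 : Integrable (fun a => wx a * i - wy a * i) haarC :=
      integrable_circ _ ((cwx.mul continuous_const).sub (cwy.mul continuous_const))
    have hu_ptw : ∀ a : Circ, |u (cons a x) - u (cons a y)| ≤ C * ((1/2:ℝ)^α * d^α) := by
      intro a
      have h := hu (cons a x) (cons a y)
      rwa [hcons a, hθd] at h
    have hw_ptw : ∀ a : Circ, |wx a - wy a| ≤ P.M * (P.HE * ((1/2:ℝ)^α * d^α)) := by
      intro a
      have h1 := exp_lip (P.up (cons a x)) (P.up (cons a y))
      have h2 := P.hol (cons a x) (cons a y)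
      rw [hcons a, hθd] at h2
      exact h1.trans (mul_le_mul_of_nonneg_left h2 P.Mpos.le)
    have hsplit : P.L u x - P.L u y = (∫ a, wx a * (u (cons a x) - u (cons a y)) ∂haarC)
        + ((∫ a, (wx a - wy a) * (u (cons a y) - i) ∂haarC)
          + (∫ a, (wx a * i - wy a * i) ∂haarC)) := by
      have ha : (∫ a, ((wx a - wy a) * (u (cons a y) - i) + (wx a * i - wy a * i)) ∂haarC)
          = (∫ a, (wx a - wy a) * (u (cons a y) - i) ∂haarC)
            + (∫ a, (wx a * i - wy a * i) ∂haarC) := integral_add int2 int3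
      have hb : (∫ a, (wx a * (u (cons a x) - u (cons a y))
            + ((wx a - wy a) * (u (cons a y) - i) + (wx a * i - wy a * i))) ∂haarC)
          = (∫ a, wx a * (u (cons a x) - u (cons a y)) ∂haarC)
            + (∫ a, ((wx a - wy a) * (u (cons a y) - i) + (wx a * i - wy a * i)) ∂haarC) :=
        integral_add int1 (int2.add int3)
      have hLL : P.L u x - P.L u y
          = ∫ a, (wx a * u (cons a x) - wy a * u (cons a y)) ∂haarC := by
        rw [integral_sub (P.int_mix huc x x) (P.int_mix huc y y)]
        rfl
      rw [hLL, ← ha, ← hb]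
      congr 1
      funext a
      ring
    have h3 : (∫ a, (wx a * i - wy a * i) ∂haarC) = 0 := by
      rw [integral_sub ((P.int_w x).mul_const i) ((P.int_w y).mul_const i),
        integral_mul_const, integral_mul_const]
      have e1 : (∫ a, wx a ∂haarC) = 1 := P.norm1 x
      have e2 : (∫ a, wy a ∂haarC) = 1 := P.norm1 y
      rw [e1, e2]; ring
    have h1 : (∫ a, wx a * (u (cons a x) - u (cons a y)) ∂haarC) ≤ C * ((1/2:ℝ)^α * d^α) := by
      have hp : ∀ a, wx a * (u (cons a x) - u (cons a y)) ≤ wx a * (C * ((1/2:ℝ)^α * d^α)) :=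
        fun a => mul_le_mul_of_nonneg_left ((le_abs_self _).trans (hu_ptw a)) (P.wpos _).le
      calc (∫ a, wx a * (u (cons a x) - u (cons a y)) ∂haarC)
          ≤ ∫ a, wx a * (C * ((1/2:ℝ)^α * d^α)) ∂haarC :=
            integral_mono int1 ((P.int_w x).mul_const _) hp
        _ = C * ((1/2:ℝ)^α * d^α) := by
            rw [integral_mul_const]
            have e1 : (∫ a, wx a ∂haarC) = 1 := P.norm1 x
            rw [e1, one_mul]
    have h2 : (∫ a, (wx a - wy a) * (u (cons a y) - i) ∂haarC)
        ≤ P.M * (P.HE * ((1/2:ℝ)^α * d^α)) * O := by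
      have hp : ∀ a, (wx a - wy a) * (u (cons a y) - i)
          ≤ P.M * (P.HE * ((1/2:ℝ)^α * d^α)) * O := by
        intro a
        have hb := hbd (cons a y)
        have habs : (wx a - wy a) * (u (cons a y) - i) ≤ |wx a - wy a| * (u (cons a y) - i) := by
          apply mul_le_mul_of_nonneg_right (le_abs_self _) (by linarith [hb.1])
        refine habs.trans ?_
        apply mul_le_mul (hw_ptw a) (by linarith [hb.2]) (by linarith [hb.1]) ?_
        exact mul_nonneg P.Mpos.le (mul_nonneg P.hHE
          (mul_nonneg (Real.rpow_nonneg (by norm_num) α) (Real.rpow_nonneg hdnn α)))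
      calc (∫ a, (wx a - wy a) * (u (cons a y) - i) ∂haarC)
          ≤ ∫ _a, P.M * (P.HE * ((1/2:ℝ)^α * d^α)) * O ∂haarC :=
            integral_mono int2 (integrable_const _) hp
        _ = P.M * (P.HE * ((1/2:ℝ)^α * d^α)) * O := by simp
    have final : P.L u x - P.L u y
        ≤ C * ((1/2:ℝ)^α * d^α) + P.M * (P.HE * ((1/2:ℝ)^α * d^α)) * O + 0 := by
      rw [hsplit]; linarith
    refine final.trans (le_of_eq ?_)
    ring
  intro x y
  rw [abs_sub_le_iff]
  refine ⟨key x y, ?_⟩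
  have h := key y x
  rwa [dB_symm y x] at h

end PotData

lemma holder_neg {α C : ℝ} {v : Bs → ℝ} (hv : IsHolderB α C v) :
    IsHolderB α C (fun z => -v z) := fun x y => by
  have h := hv x y
  rw [← abs_neg] at h
  convert h using 2
  ring

lemma holder_const_add {α C : ℝ} {v : Bs → ℝ} (hv : IsHolderB α C v) (c : ℝ) :
    IsHolderB α C (fun z => c + v z) := fun x y => by
  have h := hv x y
  convert h using 2
  ring

lemma holder_const_sub {α C : ℝ} {v : Bs → ℝ} (hv : IsHolderB α C v) (c : ℝ) :
    IsHolderB α C (fun z => c - v z) := fun x y => by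
  have h := hv x y
  rw [← abs_neg] at h
  convert h using 2
  ring

lemma thetaPos (α : ℝ) : 0 < (1/2:ℝ)^α := Real.rpow_pos_of_pos (by norm_num) α

lemma thetaLt1 {α : ℝ} (hα0 : 0 < α) : (1/2:ℝ)^α < 1 :=
  Real.rpow_lt_one (by norm_num) (by norm_num) hα0

namespace PotData
variable {α : ℝ} (P : PotData α)

lemma Kp_nonneg : 0 ≤ (1/2:ℝ)^α * P.M * P.HE / (1 - (1/2:ℝ)^α) :=
  div_nonneg (mul_nonneg (mul_nonneg (thetaPos α).le P.Mpos.le) P.hHE)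
    (by linarith [thetaLt1 P.hα])

lemma iterate_step {u : Bs → ℝ} {C O i : ℝ} (hu : IsHolderB α C u) (hC : 0 ≤ C)
    (hbd : ∀ z, i ≤ u z ∧ u z ≤ i + O) : ∀ n : ℕ,
    IsHolderB α (((1/2:ℝ)^α)^n * C + ((1/2:ℝ)^α * P.M * P.HE / (1 - (1/2:ℝ)^α)) * O)
        ((P.L)^[n] u)
      ∧ ∀ z, i ≤ (P.L)^[n] u z ∧ (P.L)^[n] u z ≤ i + O := by
  have hθ1 := thetaLt1 P.hα
  have hθ0 := (thetaPos α)
  have hO : 0 ≤ O := by have h := hbd pt; linarith [h.1, h.2]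
  have hK' := P.Kp_nonneg
  have hKid : (1/2:ℝ)^α * ((1/2:ℝ)^α * P.M * P.HE / (1 - (1/2:ℝ)^α)) + (1/2:ℝ)^α * (P.M * P.HE)
      = (1/2:ℝ)^α * P.M * P.HE / (1 - (1/2:ℝ)^α) := by
    have hne : (1:ℝ) - (1/2:ℝ)^α ≠ 0 := ne_of_gt (by linarith)
    field_simp [hne]
    ring
  intro n
  induction n with
  | zero =>
    refine ⟨isHolderB_mono hu ?_, by simpa using hbd⟩
    have : 0 ≤ ((1/2:ℝ)^α * P.M * P.HE / (1 - (1/2:ℝ)^α)) * O := mul_nonneg hK' hO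
    simp only [pow_zero, one_mul]
    linarith
  | succ n ih =>
    have hCn : 0 ≤ ((1/2:ℝ)^α)^n * C + ((1/2:ℝ)^α * P.M * P.HE / (1 - (1/2:ℝ)^α)) * O := by
      have h1 : 0 ≤ ((1/2:ℝ)^α)^n * C := mul_nonneg (pow_nonneg hθ0.le n) hC
      have h2 : 0 ≤ ((1/2:ℝ)^α * P.M * P.HE / (1 - (1/2:ℝ)^α)) * O := mul_nonneg hK' hO
      linarith
    have hcont : Continuous ((P.L)^[n] u) := continuous_of_holder P.hα ih.1
    have hstep := P.step_holder ih.1 hCn ih.2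
    constructor
    · rw [Function.iterate_succ_apply']
      apply isHolderB_mono hstep
      rw [pow_succ]
      apply le_of_eq
      linear_combination O * hKid
    · intro z
      rw [Function.iterate_succ_apply']
      exact ⟨P.L_lower hcont (fun w => (ih.2 w).1) z, P.L_upper hcont (fun w => (ih.2 w).2) z⟩

lemma iterate_cont {u : Bs → ℝ} {C O i : ℝ} (hu : IsHolderB α C u) (hC : 0 ≤ C)
    (hbd : ∀ z, i ≤ u z ∧ u z ≤ i + O) (n : ℕ) : Continuous ((P.L)^[n] u) :=
  continuous_of_holder P.hα (P.iterate_step hu hC hbd n).1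

lemma iterate_affine {v : Bs → ℝ} {C O i : ℝ} (hv : IsHolderB α C v) (hC : 0 ≤ C)
    (hbd : ∀ z, i ≤ v z ∧ v z ≤ i + O) (c : ℝ) :
    ∀ n x, (P.L)^[n] (fun z => c + v z) x = c + (P.L)^[n] v x := by
  intro n
  induction n with
  | zero => intro x; simp
  | succ n ih =>
    intro x
    have hcont : Continuous ((P.L)^[n] v) := P.iterate_cont hv hC hbd n
    have hfun : (P.L)^[n] (fun z => c + v z) = fun z => c + (P.L)^[n] v z := funext ih
    rw [Function.iterate_succ_apply', hfun, P.L_affine hcont c x, Function.iterate_succ_apply']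

lemma iterate_neg (v : Bs → ℝ) : ∀ n x, (P.L)^[n] (fun z => -v z) x = -((P.L)^[n] v x) := by
  intro n
  induction n with
  | zero => intro x; simp
  | succ n ih =>
    intro x
    have hfun : (P.L)^[n] (fun z => -v z) = fun z => -((P.L)^[n] v z) := funext ih
    rw [Function.iterate_succ_apply', hfun, P.L_neg _ x, Function.iterate_succ_apply']

lemma iterate_const_sub {v : Bs → ℝ} {C O i : ℝ} (hv : IsHolderB α C v) (hC : 0 ≤ C)
    (hbd : ∀ z, i ≤ v z ∧ v z ≤ i + O) (c : ℝ) :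
    ∀ n x, (P.L)^[n] (fun z => c - v z) x = c - (P.L)^[n] v x := by
  intro n x
  have h1 : (fun z => c - v z) = fun z => c + (fun w => -v w) z := by funext z; ring
  have hnb : ∀ z, -(i + O) ≤ -v z ∧ -v z ≤ -(i + O) + O := by
    intro z
    have h := hbd z
    constructor <;> [linarith [h.2]; linarith [h.1]]
  rw [h1, P.iterate_affine (holder_neg hv) hC hnb c n x, P.iterate_neg v n x]
  ring

lemma minor {u : Bs → ℝ} (hu : Continuous u) (hnn : ∀ z, 0 ≤ u z) (x : Bs) :
    P.eps * (zeroPot α P.hα).L u x ≤ P.L u x := by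
  have hT : (zeroPot α P.hα).L u x = ∫ a, u (cons a x) ∂haarC := by
    show (∫ a, Real.exp ((zeroPot α P.hα).E (cons a x)) * u (cons a x) ∂haarC) = _
    simp [zeroPot]
  rw [hT, ← integral_const_mul]
  apply integral_mono (((integrable_circ _ (hu.comp (continuous_cons x)))).const_mul P.eps)
    (P.int_mix hu x x)
  intro a
  exact mul_le_mul_of_nonneg_right (P.low _) (hnn _)

lemma minor_iterate {u : Bs → ℝ} {C O : ℝ} (hu : IsHolderB α C u) (hC : 0 ≤ C)
    (hbd : ∀ z, 0 ≤ u z ∧ u z ≤ O) :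
    ∀ n x, P.eps^n * ((zeroPot α P.hα).L)^[n] u x ≤ (P.L)^[n] u x := by
  have hbd' : ∀ z, (0:ℝ) ≤ u z ∧ u z ≤ 0 + O := by
    intro z; have := hbd z; constructor <;> linarith [this.1, this.2]
  intro n
  induction n with
  | zero => intro x; simp
  | succ n ih =>
    intro x
    set T := (zeroPot α P.hα).L with hTdef
    have hLn := P.iterate_step hu hC hbd' n
    have hTn := (zeroPot α P.hα).iterate_step hu hC hbd' n
    have cLn : Continuous ((P.L)^[n] u) := continuous_of_holder P.hα hLn.1
    have cTn : Continuous (T^[n] u) := continuous_of_holder P.hα hTn.1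
    have step1 : T (fun z => P.eps^n * T^[n] u z) x = P.eps^n * T (T^[n] u) x :=
      (zeroPot α P.hα).L_smul _ _ x
    have step2 : T (fun z => P.eps^n * T^[n] u z) x ≤ T ((P.L)^[n] u) x := by
      apply (zeroPot α P.hα).L_le (continuous_const.mul cTn) cLn
      intro z
      exact ih z
    have step3 : P.eps * T ((P.L)^[n] u) x ≤ P.L ((P.L)^[n] u) x :=
      P.minor cLn (fun z => (hLn.2 z).1.trans_eq' rfl) x
    rw [Function.iterate_succ_apply', Function.iterate_succ_apply', pow_succ]
    calc P.eps^n * P.eps * T (T^[n] u) x = P.eps * (T (fun z => P.eps^n * T^[n] u z) x) := by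
          rw [step1]; ring
      _ ≤ P.eps * T ((P.L)^[n] u) x := by
          apply mul_le_mul_of_nonneg_left step2 P.heps.le
      _ ≤ P.L ((P.L)^[n] u) x := step3

lemma doeblin {u : Bs → ℝ} {C O i : ℝ} (hu : IsHolderB α C u) (hC : 0 ≤ C)
    (hbd : ∀ z, i ≤ u z ∧ u z ≤ i + O) (n : ℕ) (x y : Bs) :
    (P.L)^[n] u x - (P.L)^[n] u y
      ≤ (1 - P.eps^n) * O + P.eps^n * (((1/2:ℝ)^α)^n * C * (2*Real.pi)^α) := by
  set T := (zeroPot α P.hα).L with hTdef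
  have hO : 0 ≤ O := by have h := hbd pt; linarith [h.1, h.2]
  set h : Bs → ℝ := fun z => u z - i with hhdef
  have hh_hol : IsHolderB α C h := fun w z => by
    have := hu w z
    convert this using 2
    simp [hhdef]
  have hh_bd : ∀ z, 0 ≤ h z ∧ h z ≤ O := by
    intro z; have := hbd z; constructor <;> [simp [hhdef]; skip]
    · linarith [this.1]
    · simp only [hhdef]; linarith [this.2]
  have hh_bd' : ∀ z, (0:ℝ) ≤ h z ∧ h z ≤ 0 + O := by
    intro z; have := hh_bd z; exact ⟨this.1, by linarith [this.2]⟩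
  have huh : u = fun z => i + h z := by funext z; simp [hhdef]
  have hLu : ∀ w, (P.L)^[n] u w = i + (P.L)^[n] h w := by
    intro w
    conv_lhs => rw [huh]
    exact P.iterate_affine hh_hol hC hh_bd' i n w
  set v : Bs → ℝ := fun z => O - h z with hvdef
  have hv_hol : IsHolderB α C v := holder_const_sub hh_hol O
  have hv_bd' : ∀ z, (0:ℝ) ≤ v z ∧ v z ≤ O := by
    intro z; have := hh_bd z
    constructor <;> simp only [hvdef] <;> [linarith [this.2]; linarith [this.1]]
  have hminor_v := P.minor_iterate hv_hol hC hv_bd' n x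
  have hminor_h := P.minor_iterate hh_hol hC hh_bd n y
  have hLv : (P.L)^[n] v x = O - (P.L)^[n] h x := P.iterate_const_sub hh_hol hC hh_bd' O n x
  have hTv : T^[n] v x = O - T^[n] h x := (zeroPot α P.hα).iterate_const_sub hh_hol hC hh_bd' O n x
  -- Hölder bound on T^[n] h
  have hTn := ((zeroPot α P.hα).iterate_step hh_hol hC hh_bd' n).1
  have hTosc : T^[n] h x - T^[n] h y ≤ ((1/2:ℝ)^α)^n * C * (2*Real.pi)^α := by
    have hzM : (zeroPot α P.hα).M = 1 := rfl
    have hzH : (zeroPot α P.hα).HE = 0 := rfl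
    rw [hzM, hzH] at hTn
    simp only [mul_one, mul_zero, zero_div, zero_mul, add_zero] at hTn
    have h1 := hTn x y
    have h2 : dB x y ^ α ≤ (2*Real.pi)^α :=
      Real.rpow_le_rpow (dB_nonneg x y) (dB_le x y) P.hα.le
    have h3 : T^[n] h x - T^[n] h y ≤ |T^[n] h x - T^[n] h y| := le_abs_self _
    have h4 : ((1/2:ℝ)^α)^n * C * dB x y ^ α ≤ ((1/2:ℝ)^α)^n * C * (2*Real.pi)^α := by
      apply mul_le_mul_of_nonneg_left h2 (mul_nonneg (pow_nonneg (thetaPos α).le n) hC)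
    calc T^[n] h x - T^[n] h y ≤ ((1/2:ℝ)^α)^n * C * dB x y ^ α := h3.trans h1
      _ ≤ _ := h4
  have key1 : (P.L)^[n] h x ≤ O - P.eps^n * (O - T^[n] h x) := by
    have := hminor_v
    rw [hLv, hTv] at this
    linarith
  have key2 : P.eps^n * T^[n] h y ≤ (P.L)^[n] h y := hminor_h
  have hepsn : 0 ≤ P.eps^n := pow_nonneg P.heps.le n
  rw [hLu x, hLu y]
  have expand : P.eps^n * (T^[n] h x) - P.eps^n * (T^[n] h y)
      ≤ P.eps^n * (((1/2:ℝ)^α)^n * C * (2*Real.pi)^α) := by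
    rw [← mul_sub]
    exact mul_le_mul_of_nonneg_left hTosc hepsn
  linarith

end PotData

instance : Nonempty Bs := ⟨pt⟩

lemma abs_bound_of_range {u : Bs → ℝ} {j W : ℝ} (h : ∀ z, j ≤ u z ∧ u z ≤ j + W) :
    ∀ z, |u z| ≤ |j| + |W| := by
  intro z
  have h1 := (h z).1
  have h2 := (h z).2
  rw [abs_le]
  constructor
  · have := neg_abs_le j; have := abs_nonneg W; linarith
  · have := le_abs_self j; have := le_abs_self W; linarith

theorem uniform_conv {α : ℝ} (P : PotData α)
    {g : Bs → ℝ} {Cg : ℝ} (hg : IsHolderB α Cg g) (hCg : 0 ≤ Cg)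
    (m : Measure Bs) (hm : IsProbabilityMeasure m)
    (hfix : ∀ u : Bs → ℝ, Continuous u → (∃ C, ∀ x, |u x| ≤ C) →
      ∫ x, Ruelle P.E u x ∂m = ∫ x, u x ∂m) :
    ∃ bnd : ℕ → ℝ, Tendsto bnd atTop (𝓝 0) ∧
      ∀ n x, |(P.L)^[n] g x - ∫ y, g y ∂m| ≤ bnd n := by
  have hα0 := P.hα
  set θ : ℝ := (1/2:ℝ)^α with hθdef
  have hθ0 : 0 < θ := thetaPos α
  have hθ1 : θ < 1 := thetaLt1 hα0
  set K' : ℝ := θ * P.M * P.HE / (1 - θ) with hK'def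
  have hK'0 : 0 ≤ K' := P.Kp_nonneg
  set Dα : ℝ := (2*Real.pi)^α with hDαdef
  have hDα1 : 1 ≤ Dα := by
    rw [hDαdef, ← Real.one_rpow α]
    exact Real.rpow_le_rpow (by norm_num) (by nlinarith [Real.pi_gt_three]) hα0.le
  have hDα0 : 0 < Dα := lt_of_lt_of_le one_pos hDα1
  -- bounds for g
  set ig : ℝ := g pt - Cg * Dα with higdef
  set Og : ℝ := 2 * Cg * Dα with hOgdef
  have hOg0 : 0 ≤ Og := by positivity
  have hgbd : ∀ z, ig ≤ g z ∧ g z ≤ ig + Og := by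
    intro z
    have h := holder_bounded hα0.le hCg hg z
    rw [abs_le] at h
    constructor <;> simp only [higdef, hOgdef] <;> linarith [h.1, h.2]
  -- choose block length n₀
  have hB0 : (0:ℝ) < (2*K'+1)*Dα + 1 := by positivity
  obtain ⟨n₀', hn₀'⟩ := exists_pow_lt_of_lt_one
    (show (0:ℝ) < (1/2) / ((2*K'+1)*Dα + 1) by positivity) hθ1
  set n₀ : ℕ := max n₀' 1 with hn₀def
  have hn₀1 : 1 ≤ n₀ := le_max_right _ _
  have hn₀pos : 0 < n₀ := hn₀1
  have hθn₀ : θ^n₀ * ((2*K'+1)*Dα + 1) ≤ 1/2 := by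
    have hle : θ^n₀ ≤ θ^n₀' := pow_le_pow_of_le_one hθ0.le hθ1.le (le_max_left _ _)
    have h2 : θ^n₀ ≤ 1/2/((2*K'+1)*Dα + 1) := hle.trans hn₀'.le
    calc θ^n₀ * ((2*K'+1)*Dα + 1) ≤ (1/2/((2*K'+1)*Dα + 1)) * ((2*K'+1)*Dα + 1) :=
          mul_le_mul_of_nonneg_right h2 hB0.le
      _ = 1/2 := div_mul_cancel₀ _ hB0.ne'
  set ε' : ℝ := P.eps^n₀ with hε'def
  have hε'0 : 0 < ε' := pow_pos P.heps n₀
  have hε'1 : ε' ≤ 1 := pow_le_one₀ P.heps.le P.eps_le_one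
  set γ : ℝ := ε' / (2*K'+1) with hγdef
  have hγ0 : 0 < γ := by positivity
  set ρ : ℝ := 1 - ε'/2 with hρdef
  have hρhalf : 1/2 ≤ ρ := by simp only [hρdef]; linarith
  have hρ0 : 0 ≤ ρ := le_trans (by norm_num) hρhalf
  have hρ1 : ρ < 1 := by simp only [hρdef]; linarith
  have hγε : γ * (2*K'+1) = ε' := by
    rw [hγdef]; field_simp
  have hKγ : K' * γ ≤ ε'/2 := by
    have h : 2*(K'*γ) + γ = ε' := by rw [← hγε]; ring
    linarith
  have hθργ : θ^n₀ * ((2*K'+1)*Dα + 1) ≤ ρ := hθn₀.trans hρhalf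
  -- the block contraction
  have block : ∀ C O : ℝ, 0 ≤ C → 0 ≤ O → ∀ u : Bs → ℝ, IsHolderB α C u →
      (∃ j, ∀ z, j ≤ u z ∧ u z ≤ j + O) →
      ∃ C' O', 0 ≤ C' ∧ 0 ≤ O' ∧ O' + γ*C' ≤ ρ*(O + γ*C) ∧
        IsHolderB α C' ((P.L)^[n₀] u) ∧
        ∃ j', ∀ z, j' ≤ (P.L)^[n₀] u z ∧ (P.L)^[n₀] u z ≤ j' + O' := by
    intro C O hC hO u hu ⟨j, hj⟩
    have hstep := P.iterate_step hu hC hj n₀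
    rw [← hθdef, ← hK'def] at hstep
    refine ⟨θ^n₀*C + K'*O, (1-ε')*O + ε'*(θ^n₀*C*Dα), ?_, ?_, ?_, hstep.1, ?_⟩
    · have h1 : 0 ≤ θ^n₀*C := mul_nonneg (pow_nonneg hθ0.le n₀) hC
      have h2 : 0 ≤ K'*O := mul_nonneg hK'0 hO
      linarith
    · have h1 : 0 ≤ ε'*(θ^n₀*C*Dα) := by positivity
      have h2 : 0 ≤ (1-ε')*O := mul_nonneg (by linarith) hO
      linarith
    · have hCpart : θ^n₀ * (ε'*Dα + γ) ≤ ρ*γ := by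
        have heq : ε'*Dα + γ = γ*((2*K'+1)*Dα + 1) := by rw [← hγε]; ring
        rw [heq]
        calc θ^n₀ * (γ*((2*K'+1)*Dα + 1)) = γ * (θ^n₀ * ((2*K'+1)*Dα + 1)) := by ring
          _ ≤ γ * ρ := mul_le_mul_of_nonneg_left hθργ hγ0.le
          _ = ρ*γ := by ring
      have p1 : (1-ε'+γ*K')*O ≤ ρ*O :=
        mul_le_mul_of_nonneg_right (by simp only [hρdef]; linarith) hO
      have p2 : (θ^n₀*(ε'*Dα+γ))*C ≤ (ρ*γ)*C := mul_le_mul_of_nonneg_right hCpart hC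
      have hexp : (1-ε')*O + ε'*(θ^n₀*C*Dα) + γ*(θ^n₀*C + K'*O)
          = (1-ε'+γ*K')*O + (θ^n₀*(ε'*Dα+γ))*C := by ring
      rw [hexp]
      have hgoal : ρ*(O + γ*C) = ρ*O + (ρ*γ)*C := by ring
      rw [hgoal]
      linarith
    · -- oscillation bound via Doeblin
      have hosc : ∀ x y, (P.L)^[n₀] u x - (P.L)^[n₀] u y ≤ (1-ε')*O + ε'*(θ^n₀*C*Dα) := by
        intro x y
        have hd := P.doeblin hu hC hj n₀ x y
        rw [← hθdef, ← hDαdef, ← hε'def] at hd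
        calc (P.L)^[n₀] u x - (P.L)^[n₀] u y ≤ (1-ε')*O + ε'*(θ^n₀*C*(2*Real.pi)^α) := hd
          _ = (1-ε')*O + ε'*(θ^n₀*C*Dα) := by rw [← hDαdef]
      have hbdd : BddBelow (Set.range ((P.L)^[n₀] u)) := by
        refine ⟨j, ?_⟩
        rintro t ⟨z, rfl⟩
        exact (hstep.2 z).1
      refine ⟨⨅ z, (P.L)^[n₀] u z, fun z => ⟨ciInf_le hbdd z, ?_⟩⟩
      have hle : (P.L)^[n₀] u z - ((1-ε')*O + ε'*(θ^n₀*C*Dα)) ≤ ⨅ w, (P.L)^[n₀] u w := by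
        apply le_ciInf
        intro w
        linarith [hosc z w]
      linarith
  -- master: contraction along blocks
  set V : ℝ := Og + γ * Cg with hVdef
  have hV0 : 0 ≤ V := by positivity
  have master : ∀ k : ℕ, ∃ C O : ℝ, 0 ≤ C ∧ 0 ≤ O ∧ O + γ*C ≤ ρ^k * V ∧
      IsHolderB α C ((P.L)^[n₀*k] g) ∧
      ∃ j, ∀ z, j ≤ (P.L)^[n₀*k] g z ∧ (P.L)^[n₀*k] g z ≤ j + O := by
    intro k
    induction k with
    | zero =>
      refine ⟨Cg, Og, hCg, hOg0, ?_, ?_, ig, ?_⟩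
      · simp only [pow_zero, one_mul, hVdef]; linarith
      · simpa using hg
      · simpa using hgbd
    | succ k ih =>
      obtain ⟨C, O, hC, hO, hVk, hhol, hbd⟩ := ih
      obtain ⟨C', O', hC', hO', hcontr, hhol', hbd'⟩ := block C O hC hO _ hhol hbd
      have hiter : (P.L)^[n₀*(k+1)] g = (P.L)^[n₀] ((P.L)^[n₀*k] g) := by
        rw [Nat.mul_succ, add_comm, Function.iterate_add_apply]
      refine ⟨C', O', hC', hO', ?_, by rwa [hiter], by rwa [hiter]⟩
      calc O' + γ*C' ≤ ρ*(O + γ*C) := hcontr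
        _ ≤ ρ*(ρ^k * V) := mul_le_mul_of_nonneg_left hVk hρ0
        _ = ρ^(k+1) * V := by rw [pow_succ]; ring
  -- full sequence bounds
  have full : ∀ n : ℕ, ∃ Cn, 0 ≤ Cn ∧ IsHolderB α Cn ((P.L)^[n] g) ∧
      ∃ j, ∀ z, j ≤ (P.L)^[n] g z ∧ (P.L)^[n] g z ≤ j + ρ^(n/n₀) * V := by
    intro n
    have hdecomp : (P.L)^[n] g = (P.L)^[n % n₀] ((P.L)^[n₀*(n/n₀)] g) := by
      conv_lhs => rw [← Nat.mod_add_div n n₀]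
      rw [Function.iterate_add_apply]
    obtain ⟨C, O, hC, hO, hVk, hhol, j, hj⟩ := master (n/n₀)
    have hOV : O ≤ ρ^(n/n₀) * V := by linarith [mul_nonneg hγ0.le hC]
    have hstep := P.iterate_step hhol hC hj (n % n₀)
    rw [hdecomp]
    refine ⟨_, ?_, hstep.1, j, fun z => ⟨(hstep.2 z).1, ?_⟩⟩
    · have h1 : 0 ≤ ((1/2:ℝ)^α)^(n % n₀) * C :=
        mul_nonneg (pow_nonneg (thetaPos α).le _) hC
      have h2 : 0 ≤ (1/2:ℝ)^α * P.M * P.HE / (1 - (1/2:ℝ)^α) * O :=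
        mul_nonneg P.Kp_nonneg hO
      linarith
    · linarith [(hstep.2 z).2]
  -- invariance of the integral
  have hinv : ∀ n : ℕ, ∫ x, (P.L)^[n] g x ∂m = ∫ x, g x ∂m := by
    intro n
    induction n with
    | zero => simp
    | succ n ih =>
      obtain ⟨Cn, hCn0, hCn, j, hj⟩ := full n
      have hcont : Continuous ((P.L)^[n] g) := continuous_of_holder hα0 hCn
      have hbd : ∃ C, ∀ x, |(P.L)^[n] g x| ≤ C := ⟨_, abs_bound_of_range hj⟩
      rw [Function.iterate_succ_apply']
      have := hfix ((P.L)^[n] g) hcont hbd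
      rw [← ih]
      exact this
  -- conclude
  refine ⟨fun n => ρ^(n/n₀) * V, ?_, ?_⟩
  · have hdiv : Tendsto (fun n : ℕ => n / n₀) atTop atTop := by
      apply Filter.tendsto_atTop_atTop.mpr
      intro b
      exact ⟨b * n₀, fun n hn => (Nat.le_div_iff_mul_le hn₀pos).mpr hn⟩
    have hpow : Tendsto (fun k : ℕ => ρ^k) atTop (𝓝 0) :=
      tendsto_pow_atTop_nhds_zero_of_lt_one hρ0 hρ1
    have := (hpow.comp hdiv).mul_const V
    simpa using this
  · intro n x
    obtain ⟨Cn, hCn0, hCn, j, hj⟩ := full n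
    have hcont : Continuous ((P.L)^[n] g) := continuous_of_holder hα0 hCn
    have hintm : Integrable ((P.L)^[n] g) m :=
      integrable_bdd m _ hcont _ (abs_bound_of_range hj)
    have hlow : j ≤ ∫ y, (P.L)^[n] g y ∂m := by
      have h1 : (∫ _y, j ∂m) ≤ ∫ y, (P.L)^[n] g y ∂m :=
        integral_mono (integrable_const j) hintm (fun z => (hj z).1)
      simpa using h1
    have hup : (∫ y, (P.L)^[n] g y ∂m) ≤ j + ρ^(n/n₀) * V := by
      have h1 : (∫ y, (P.L)^[n] g y ∂m) ≤ ∫ _y, j + ρ^(n/n₀) * V ∂m :=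
        integral_mono hintm (integrable_const _) (fun z => (hj z).2)
      simpa using h1
    rw [hinv n] at hlow hup
    rw [abs_le]
    constructor <;> [linarith [(hj x).1]; linarith [(hj x).2]]

/-- for every α-Hölder `φ`, `L_A^n(φ)/λ_A^n` converges uniformly to
`x ↦ ψ_A(x) ∫ (φ/ψ_A) dm`. -/
theorem iterates_div_eigenvalue_tendsto (α H : ℝ) (hα0 : 0 < α) (hα1 : α ≤ 1)
    (A : Bs → ℝ) (hA : IsHolderB α H A)
    (ψ : Bs → ℝ) (hψc : Continuous ψ) (hψpos : ∀ x, 0 < ψ x)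
    (Hψ : ℝ) (hψlog : IsHolderB α Hψ (fun x => Real.log (ψ x)))
    (lam : ℝ) (hlam : 0 < lam) (heig : ∀ x, Ruelle A ψ x = lam * ψ x)
    (m : Measure Bs) (hm : IsProbabilityMeasure m)
    (hfix : FixedDual (normPot A ψ lam) m)
    (hmuniq : ∀ m' : Measure Bs, IsProbabilityMeasure m' →
      FixedDual (normPot A ψ lam) m' → m' = m)
    (φ : Bs → ℝ) (Cφ : ℝ) (hφ : IsHolderB α Cφ φ) :
    TendstoUniformly (fun n x => (Ruelle A)^[n] φ x / lam ^ n)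
      (fun x => ψ x * ∫ y, φ y / ψ y ∂m) atTop := by
  -- normalized nonnegative Hölder constants
  set H' : ℝ := max H 0 with hH'def
  set Cφ' : ℝ := max Cφ 0 with hCφ'def
  set Hψ' : ℝ := max Hψ 0 with hHψ'def
  have hA' : IsHolderB α H' A := isHolderB_mono hA (le_max_left _ _)
  have hφ' : IsHolderB α Cφ' φ := isHolderB_mono hφ (le_max_left _ _)
  have hψlog' : IsHolderB α Hψ' (fun x => Real.log (ψ x)) :=
    isHolderB_mono hψlog (le_max_left _ _)
  have hH'0 : 0 ≤ H' := le_max_right _ _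
  have hCφ'0 : 0 ≤ Cφ' := le_max_right _ _
  have hHψ'0 : 0 ≤ Hψ' := le_max_right _ _
  set Dα : ℝ := (2*Real.pi)^α with hDαdef
  have hDα0 : 0 < Dα := Real.rpow_pos_of_pos (by positivity) α
  set E : Bs → ℝ := normPot A ψ lam with hEdef
  -- Hölder continuity of the normalized potential
  set HE : ℝ := H' + Hψ' + Hψ' * (2:ℝ)^α with hHEdef
  have h2α0 : (0:ℝ) ≤ (2:ℝ)^α := (Real.rpow_pos_of_pos two_pos α).le
  have hHE0 : 0 ≤ HE := by
    have : 0 ≤ Hψ' * (2:ℝ)^α := mul_nonneg hHψ'0 h2α0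
    simp only [hHEdef]; linarith
  have hEhol : IsHolderB α HE E := by
    intro x y
    set t : ℝ := dB x y ^ α with htdef
    have ht0 : 0 ≤ t := Real.rpow_nonneg (dB_nonneg x y) α
    have h1 : |A x - A y| ≤ H' * t := hA' x y
    have h2 : |Real.log (ψ x) - Real.log (ψ y)| ≤ Hψ' * t := hψlog' x y
    have h3 : |Real.log (ψ (shift x)) - Real.log (ψ (shift y))| ≤ Hψ' * ((2:ℝ)^α * t) := by
      have ha := hψlog' (shift x) (shift y)
      have hb : dB (shift x) (shift y) ^ α ≤ (2:ℝ)^α * t := by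
        calc dB (shift x) (shift y) ^ α ≤ (2 * dB x y) ^ α :=
              Real.rpow_le_rpow (dB_nonneg _ _) (dB_shift_le x y) hα0.le
          _ = (2:ℝ)^α * t := by rw [Real.mul_rpow (by norm_num) (dB_nonneg x y), htdef]
      exact ha.trans (mul_le_mul_of_nonneg_left hb hHψ'0)
    have hsum : E x - E y = (A x - A y) + ((Real.log (ψ x) - Real.log (ψ y))
        + -(Real.log (ψ (shift x)) - Real.log (ψ (shift y)))) := by
      simp only [hEdef, normPot]; ring
    calc |E x - E y| ≤ |A x - A y| + (|Real.log (ψ x) - Real.log (ψ y)|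
          + |Real.log (ψ (shift x)) - Real.log (ψ (shift y))|) := by
          rw [hsum]
          refine (abs_add_le _ _).trans (add_le_add_right ((abs_add_le _ _).trans ?_) _)
          rw [abs_neg]
      _ ≤ H' * t + (Hψ' * t + Hψ' * ((2:ℝ)^α * t)) := by linarith
      _ = HE * t := by simp only [hHEdef]; ring
  -- bounds and normalization for the potential
  have hEbd := holder_bounded hα0.le hHE0 hEhol
  set mE : ℝ := E pt - HE * Dα with hmEdef
  set MEb : ℝ := Real.exp (E pt + HE * Dα) with hMEbdef
  have hlow : ∀ z, Real.exp mE ≤ Real.exp (E z) := by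
    intro z
    apply Real.exp_le_exp.mpr
    have := (abs_le.mp (hEbd z)).1
    simp only [hmEdef, hDαdef]; linarith
  have hup : ∀ z, Real.exp (E z) ≤ MEb := by
    intro z
    apply Real.exp_le_exp.mpr
    have := (abs_le.mp (hEbd z)).2
    simp only [hDαdef]; linarith
  have hEc : ∀ (a : Circ) (x : Bs), Real.exp (E (cons a x))
      = Real.exp (A (cons a x)) * ψ (cons a x) * (ψ x * lam)⁻¹ := by
    intro a x
    show Real.exp (A (cons a x) + Real.log (ψ (cons a x))
      - Real.log (ψ (shift (cons a x))) - Real.log lam) = _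
    rw [shift_cons, Real.exp_sub, Real.exp_sub, Real.exp_add,
      Real.exp_log (hψpos _), Real.exp_log hlam]
    rw [div_div, div_eq_mul_inv, Real.exp_log (hψpos x)]
  have hnorm1 : ∀ x, ∫ a, Real.exp (E (cons a x)) ∂haarC = 1 := by
    intro x
    have h1 : (fun a => Real.exp (E (cons a x)))
        = fun a => (Real.exp (A (cons a x)) * ψ (cons a x)) * (ψ x * lam)⁻¹ := by
      funext a; rw [hEc a x]
    rw [h1, integral_mul_const]
    have h2 : (∫ a, Real.exp (A (cons a x)) * ψ (cons a x) ∂haarC) = lam * ψ x := heig x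
    rw [h2]
    field_simp [(hψpos x).ne', hlam.ne']
  set P : PotData α :=
    { hα := hα0, E := E, HE := HE, hHE := hHE0, hol := hEhol,
      eps := Real.exp mE, heps := Real.exp_pos _, M := MEb,
      low := hlow, up := hup, norm1 := hnorm1 } with hPdef
  -- the function g = φ/ψ and its Hölder property
  set g : Bs → ℝ := fun y => φ y / ψ y with hgdef
  set lpt : ℝ := Real.log (ψ pt) with hlptdef
  have hψlogbd := holder_bounded hα0.le hHψ'0 hψlog'
  set Mψ : ℝ := Real.exp (lpt + Hψ' * Dα) with hMψdef
  set Minv : ℝ := Real.exp (-(lpt - Hψ' * Dα)) with hMinvdef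
  have hψe : ∀ z, ψ z = Real.exp (Real.log (ψ z)) := fun z => (Real.exp_log (hψpos z)).symm
  have hMψ : ∀ z, ψ z ≤ Mψ := by
    intro z
    rw [hψe z, hMψdef]
    apply Real.exp_le_exp.mpr
    have := (abs_le.mp (hψlogbd z)).2
    simp only [hlptdef, hDαdef]; linarith
  have hMψ0 : 0 < Mψ := Real.exp_pos _
  have hive : ∀ z, (ψ z)⁻¹ = Real.exp (-(Real.log (ψ z))) := by
    intro z
    rw [Real.exp_neg, ← hψe z]
  have hMinv : ∀ z, (ψ z)⁻¹ ≤ Minv := by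
    intro z
    rw [hive z, hMinvdef]
    apply Real.exp_le_exp.mpr
    have := (abs_le.mp (hψlogbd z)).1
    simp only [hlptdef, hDαdef]; linarith
  have hMinv0 : 0 < Minv := Real.exp_pos _
  set bφ : ℝ := |φ pt| + Cφ' * Dα with hbφdef
  have hbφ : ∀ z, |φ z| ≤ bφ := by
    intro z
    have h := (abs_le.mp (holder_bounded hα0.le hCφ'0 hφ' z))
    rw [abs_le]
    constructor <;> simp only [hbφdef, hDαdef] <;> [linarith [neg_abs_le (φ pt), h.1];
      linarith [le_abs_self (φ pt), h.2]]
  have hbφ0 : 0 ≤ bφ := le_trans (abs_nonneg _) (hbφ pt)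
  set Cg : ℝ := bφ * Minv * Hψ' + Minv * Cφ' with hCgdef
  have hCg0 : 0 ≤ Cg := by
    have h1 : 0 ≤ bφ * Minv * Hψ' := by positivity
    have h2 : 0 ≤ Minv * Cφ' := by positivity
    simp only [hCgdef]; linarith
  have hg : IsHolderB α Cg g := by
    intro x y
    set t : ℝ := dB x y ^ α with htdef
    have ht0 : 0 ≤ t := Real.rpow_nonneg (dB_nonneg x y) α
    have hiv : |(ψ x)⁻¹ - (ψ y)⁻¹| ≤ Minv * (Hψ' * t) := by
      rw [hive x, hive y]
      have h1 : Real.exp (-(Real.log (ψ x))) ≤ Minv := by rw [← hive x]; exact hMinv x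
      have h2 : Real.exp (-(Real.log (ψ y))) ≤ Minv := by rw [← hive y]; exact hMinv y
      refine (exp_lip h1 h2).trans ?_
      apply mul_le_mul_of_nonneg_left _ hMinv0.le
      have h3 : |-(Real.log (ψ x)) - -(Real.log (ψ y))| = |Real.log (ψ x) - Real.log (ψ y)| := by
        rw [← abs_neg]; congr 1; ring
      rw [h3]
      exact hψlog' x y
    have hdec : g x - g y = φ x * ((ψ x)⁻¹ - (ψ y)⁻¹) + (ψ y)⁻¹ * (φ x - φ y) := by
      simp only [hgdef, div_eq_mul_inv]; ring
    calc |g x - g y| ≤ |φ x * ((ψ x)⁻¹ - (ψ y)⁻¹)| + |(ψ y)⁻¹ * (φ x - φ y)| := by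
          rw [hdec]; exact abs_add_le _ _
      _ ≤ bφ * (Minv * (Hψ' * t)) + Minv * (Cφ' * t) := by
          rw [abs_mul, abs_mul]
          apply add_le_add
          · exact mul_le_mul (hbφ x) hiv (abs_nonneg _) hbφ0
          · apply mul_le_mul _ (hφ' x y) (abs_nonneg _) hMinv0.le
            rw [abs_of_pos (inv_pos.mpr (hψpos y))]
            exact hMinv y
      _ = Cg * t := by simp only [hCgdef]; ring
  -- conjugation identity
  have key : ∀ n x, (Ruelle A)^[n] φ x = lam^n * (ψ x * (P.L)^[n] g x) := by
    intro n
    induction n with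
    | zero =>
      intro x
      simp only [Function.iterate_zero, id_eq, pow_zero, one_mul, hgdef]
      rw [mul_comm, div_mul_cancel₀ _ (hψpos x).ne']
    | succ n ih =>
      intro x
      have hL : (P.L)^[n+1] g x = (ψ x * lam)⁻¹
          * ∫ a, Real.exp (A (cons a x)) * ψ (cons a x) * (P.L)^[n] g (cons a x) ∂haarC := by
        rw [Function.iterate_succ_apply']
        show (∫ a, Real.exp (P.E (cons a x)) * (P.L)^[n] g (cons a x) ∂haarC) = _
        rw [← integral_const_mul]
        congr 1
        funext a
        have : P.E = E := rfl
        rw [this, hEc a x]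
        ring
      have hR : (Ruelle A)^[n+1] φ x
          = lam^n * ∫ a, Real.exp (A (cons a x)) * ψ (cons a x) * (P.L)^[n] g (cons a x) ∂haarC := by
        rw [Function.iterate_succ_apply']
        show (∫ a, Real.exp (A (cons a x)) * ((Ruelle A)^[n] φ (cons a x)) ∂haarC) = _
        rw [← integral_const_mul]
        congr 1
        funext a
        rw [ih (cons a x)]
        ring
      rw [hR, hL]
      field_simp [(hψpos x).ne', hlam.ne']
      ring
  -- apply the convergence theorem
  obtain ⟨bnd, hbnd0, hbnd⟩ := uniform_conv P hg hCg0 m hm (fun u hc hb => hfix u hc hb)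
  rw [Metric.tendstoUniformly_iff]
  intro ε hε
  have htend : Tendsto (fun n => Mψ * bnd n) atTop (𝓝 0) := by
    simpa using hbnd0.const_mul Mψ
  have h0 : ∀ᶠ y : ℝ in 𝓝 0, y < ε := eventually_lt_nhds hε
  filter_upwards [htend.eventually h0] with n hn x
  have hF : (Ruelle A)^[n] φ x / lam^n = ψ x * (P.L)^[n] g x := by
    rw [key n x, mul_div_cancel_left₀ _ (pow_ne_zero n hlam.ne')]
  rw [Real.dist_eq, hF]
  have hc : (∫ y, φ y / ψ y ∂m) = ∫ y, g y ∂m := rfl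
  calc |ψ x * ∫ y, φ y / ψ y ∂m - ψ x * (P.L)^[n] g x|
      = ψ x * |(∫ y, g y ∂m) - (P.L)^[n] g x| := by
        rw [← mul_sub, abs_mul, abs_of_pos (hψpos x), hc]
    _ ≤ Mψ * bnd n := by
        apply mul_le_mul (hMψ x) _ (abs_nonneg _) hMψ0.le
        rw [abs_sub_comm]
        exact hbnd n x
    _ < ε := hn
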